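/- The backward error η of an approximate 2D-eigentriplet (μ̂, λ̂, x̂) with μ̂, λ̂ ∈ ℝ and ‖x̂‖ = 1, defined as the infimum of ε such that there exist Hermitian δA, δC with ‖δA‖ ≤ ε‖A‖, ‖δC‖ ≤ ε‖C‖, C + δC indefinite, and (μ̂, λ̂, x̂) an exact 2D-eigentriplet of (A + δA, C + δC), satisfies η₁ ≤ η ≤ √2 η₁, where η₁ = max{|x̂ᴴAx̂ − λ̂|/‖A‖, |x̂ᴴCx̂|/‖C‖, ‖(A − μ̂C − λ̂I)x̂‖/(‖A‖ + |μ̂|‖C‖)}. -/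

import Mathlib

set_option maxHeartbeats 4000000
set_option synthInstance.maxHeartbeats 200000
set_option linter.unusedSectionVars false
set_option linter.unusedVariables false


open scoped Matrix

/-- Spectral (ℓ²-operator) norm of a square complex matrix. -/
noncomputable def specNorm {n : Type*} [Fintype n] [DecidableEq n]
    (M : Matrix n n ℂ) : ℝ :=
  ‖Matrix.toEuclideanCLM (𝕜 := ℂ) M‖

/-- Euclidean norm of a complex vector. -/
noncomputable def vecNorm {n : Type*} [Fintype n] (x : n → ℂ) : ℝ :=
  ‖(EuclideanSpace.equiv n ℂ).symm x‖

/-- A Hermitian matrix is indefinite: its quadratic form takes both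
positive and negative values. -/
def IsIndefinite {n : Type*} [Fintype n] (M : Matrix n n ℂ) : Prop :=
  (∃ y : n → ℂ, 0 < (star y ⬝ᵥ M.mulVec y).re) ∧
  (∃ z : n → ℂ, (star z ⬝ᵥ M.mulVec z).re < 0)

/-- `(μ, lam, x)` is a 2D-eigentriplet of the pair `(A, C)`:
`(A - μ C) x = lam x`, `xᴴ C x = 0`, `xᴴ x = 1`. -/
def Is2DEigentriplet {n : Type*} [Fintype n] (A C : Matrix n n ℂ)
    (μ lam : ℝ) (x : n → ℂ) : Prop :=
  (A - (μ : ℂ) • C).mulVec x = (lam : ℂ) • x ∧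
  star x ⬝ᵥ C.mulVec x = 0 ∧ star x ⬝ᵥ x = 1

namespace Aux

variable {n : Type*} [Fintype n] [DecidableEq n]

lemma vecNorm_def (y : n → ℂ) : vecNorm y = ‖(WithLp.equiv 2 (n → ℂ)).symm y‖ := rfl

lemma inner_equiv_symm (x y : n → ℂ) :
    (inner ℂ ((WithLp.equiv 2 (n → ℂ)).symm x) ((WithLp.equiv 2 (n → ℂ)).symm y) : ℂ)
      = star x ⬝ᵥ y := by
  rw [dotProduct_comm]; rfl

lemma vecNorm_nonneg (y : n → ℂ) : 0 ≤ vecNorm y := norm_nonneg _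

lemma dot_self_eq (y : n → ℂ) : star y ⬝ᵥ y = ((vecNorm y : ℝ) : ℂ)^2 := by
  have h : (inner ℂ ((WithLp.equiv 2 (n → ℂ)).symm y) ((WithLp.equiv 2 (n → ℂ)).symm y) : ℂ)
      = ((‖(WithLp.equiv 2 (n → ℂ)).symm y‖ : ℝ) : ℂ)^2 := inner_self_eq_norm_sq_to_K _
  rw [inner_equiv_symm] at h
  rw [h, vecNorm_def]

lemma abs_dot_le (u w : n → ℂ) : ‖star u ⬝ᵥ w‖ ≤ vecNorm u * vecNorm w := by
  rw [← inner_equiv_symm]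
  exact norm_inner_le_norm _ _

lemma vecNorm_mulVec_le (M : Matrix n n ℂ) (y : n → ℂ) :
    vecNorm (M.mulVec y) ≤ specNorm M * vecNorm y := by
  have h := (Matrix.toEuclideanCLM (𝕜 := ℂ) M).le_opNorm ((WithLp.equiv 2 (n → ℂ)).symm y)
  rw [WithLp.equiv_symm_apply, Matrix.toEuclideanCLM_toLp] at h
  exact h

lemma specNorm_le (M : Matrix n n ℂ) (ρ : ℝ) (hρ : 0 ≤ ρ)
    (h : ∀ y, vecNorm (M.mulVec y) ≤ ρ * vecNorm y) : specNorm M ≤ ρ := by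
  refine ContinuousLinearMap.opNorm_le_bound _ hρ fun z => ?_
  have h2 := h (WithLp.equiv 2 (n → ℂ) z)
  rw [vecNorm_def, vecNorm_def] at h2
  have e : ((WithLp.equiv 2 (n → ℂ)).symm ((WithLp.equiv 2 (n → ℂ)) z)) = z := by simp
  rw [e] at h2
  calc ‖(Matrix.toEuclideanCLM (𝕜 := ℂ) M) z‖
      = ‖(Matrix.toEuclideanCLM (𝕜 := ℂ) M) ((WithLp.equiv 2 (n → ℂ)).symm ((WithLp.equiv 2 (n → ℂ)) z))‖ := by rw [e]
    _ = ‖(WithLp.equiv 2 (n → ℂ)).symm (M.mulVec ((WithLp.equiv 2 (n → ℂ)) z))‖ := by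
        rw [WithLp.equiv_symm_apply, Matrix.toEuclideanCLM_toLp]
    _ ≤ ρ * ‖z‖ := h2

lemma specNorm_pos (M : Matrix n n ℂ) (hM : M ≠ 0) : 0 < specNorm M := by
  rw [specNorm, norm_pos_iff]
  intro h
  exact hM ((map_eq_zero_iff _ (Matrix.toEuclideanCLM (𝕜 := ℂ)).injective).mp h)

lemma specNorm_nonneg (M : Matrix n n ℂ) : 0 ≤ specNorm M := norm_nonneg _

end Aux

namespace Aux
variable {n : Type*} [Fintype n] [DecidableEq n]

lemma vecNorm_smul (c : ℂ) (y : n → ℂ) : vecNorm (c • y) = ‖c‖ * vecNorm y := by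
  rw [vecNorm_def, vecNorm_def, ← norm_smul]
  congr 1

lemma vecNorm_eq_zero {y : n → ℂ} : vecNorm y = 0 ↔ y = 0 := by
  rw [vecNorm_def, norm_eq_zero]
  constructor
  · intro h
    have := congrArg (WithLp.equiv 2 (n → ℂ)) h
    simpa using this
  · rintro rfl; simp

lemma outer_mulVec (u v y : n → ℂ) :
    (Matrix.vecMulVec u (star v)).mulVec y = (star v ⬝ᵥ y) • u := by
  ext i
  simp [Matrix.mulVec, Matrix.vecMulVec_apply, dotProduct, Finset.mul_sum, mul_comm,
    mul_assoc, mul_left_comm]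

lemma outer_conjTranspose (u v : n → ℂ) :
    (Matrix.vecMulVec u (star v))ᴴ = Matrix.vecMulVec v (star u) := by
  ext i j
  simp [Matrix.conjTranspose_apply, Matrix.vecMulVec_apply, mul_comm]

lemma conj_dot_self (v : n → ℂ) : (starRingEnd ℂ) (star v ⬝ᵥ v) = star v ⬝ᵥ v := by
  conv_lhs => rw [Matrix.star_dotProduct]
  simp

lemma conj_dot (u v : n → ℂ) : (starRingEnd ℂ) (star u ⬝ᵥ v) = star v ⬝ᵥ u := by
  conv_lhs => rw [Matrix.star_dotProduct]
  simp

end Aux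

namespace Aux
variable {n : Type*} [Fintype n] [DecidableEq n]

lemma specNorm_zero : specNorm (0 : Matrix n n ℂ) = 0 := by
  rw [specNorm, map_zero, norm_zero]

lemma exists_hermitian (x a : n → ℂ) (hx : star x ⬝ᵥ x = 1)
    (hreal : (starRingEnd ℂ) (star x ⬝ᵥ a) = star x ⬝ᵥ a) :
    ∃ H : Matrix n n ℂ, H.IsHermitian ∧ H.mulVec x = a ∧ specNorm H ≤ vecNorm a := by
  by_cases ha : a = 0
  · refine ⟨0, Matrix.isHermitian_zero, by simp [ha], ?_⟩
    rw [specNorm_zero]; exact vecNorm_nonneg a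
  set ρ : ℝ := vecNorm a with hρdef
  have hρpos : 0 < ρ := lt_of_le_of_ne (vecNorm_nonneg a) (fun h => ha (vecNorm_eq_zero.mp h.symm))
  have hρC : (ρ : ℂ) ≠ 0 := by exact_mod_cast ne_of_gt hρpos
  set β : ℂ := star x ⬝ᵥ a with hβdef
  have hax : star a ⬝ᵥ x = β := by rw [← conj_dot x a, hreal]
  have haa : star a ⬝ᵥ a = (ρ : ℂ)^2 := dot_self_eq a
  set v : n → ℂ := x - ((ρ : ℂ)⁻¹) • a with hvdef
  have hstarv : star v = star x - ((ρ : ℂ)⁻¹) • star a := by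
    rw [hvdef, star_sub, star_smul]
    congr 1
    simp [Complex.star_def, map_inv₀, Complex.conj_ofReal]
  have hsvx : star v ⬝ᵥ x = 1 - (ρ : ℂ)⁻¹ * β := by
    rw [hstarv, sub_dotProduct, smul_dotProduct, hx, hax, smul_eq_mul]
  have hsva : star v ⬝ᵥ a = β - (ρ : ℂ) := by
    rw [hstarv, sub_dotProduct, smul_dotProduct, haa, smul_eq_mul, ← hβdef]
    field_simp
  by_cases hv : v = 0
  · -- a = ρ • x
    have hax2 : a = (ρ : ℂ) • x := by
      have hxx : x = (ρ : ℂ)⁻¹ • a := by rwa [hvdef, sub_eq_zero] at hv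
      rw [hxx, smul_smul]
      rw [mul_inv_cancel₀ hρC, one_smul]
    refine ⟨(ρ : ℂ) • (1 : Matrix n n ℂ), ?_, ?_, ?_⟩
    · unfold Matrix.IsHermitian
      rw [Matrix.conjTranspose_smul, Matrix.conjTranspose_one]
      congr 1
      simp [Complex.star_def, Complex.conj_ofReal]
    · rw [Matrix.smul_mulVec, Matrix.one_mulVec, ← hax2]
    · refine specNorm_le _ ρ (le_of_lt hρpos) fun y => ?_
      rw [Matrix.smul_mulVec, Matrix.one_mulVec, vecNorm_smul]
      simp [Complex.norm_real, Real.norm_eq_abs, abs_of_pos hρpos]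
  -- main Householder case
  set V : ℂ := star v ⬝ᵥ v with hVdef
  have hVv : V = ((vecNorm v : ℝ) : ℂ)^2 := dot_self_eq v
  have hV0 : V ≠ 0 := by
    rw [hVv]
    intro h
    have h0 : (vecNorm v : ℝ) = 0 := by exact_mod_cast pow_eq_zero_iff (n := 2) (by norm_num) |>.mp h
    exact hv (vecNorm_eq_zero.mp h0)
  have hconjV : (starRingEnd ℂ) V = V := conj_dot_self v
  have hkey : 2 * (star v ⬝ᵥ x) = V := by
    have hVcalc : V = star v ⬝ᵥ x - (ρ : ℂ)⁻¹ * (star v ⬝ᵥ a) := by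
      rw [hVdef]
      conv_lhs => rw [hvdef]
      rw [dotProduct_sub, dotProduct_smul, smul_eq_mul]
    rw [hVcalc, hsvx, hsva]
    field_simp
    ring
  set W : Matrix n n ℂ := Matrix.vecMulVec v (star v) with hWdef
  set H : Matrix n n ℂ := (ρ : ℂ) • ((1 : Matrix n n ℂ) - (2 / V) • W) with hHdef
  have hWherm : Wᴴ = W := outer_conjTranspose v v
  have hmul : ∀ y : n → ℂ, H.mulVec y = (ρ : ℂ) • (y - ((2 / V) * (star v ⬝ᵥ y)) • v) := by
    intro y
    rw [hHdef, Matrix.smul_mulVec, Matrix.sub_mulVec, Matrix.one_mulVec,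
      Matrix.smul_mulVec, hWdef, outer_mulVec, smul_smul]
  refine ⟨H, ?_, ?_, ?_⟩
  · unfold Matrix.IsHermitian
    rw [hHdef, Matrix.conjTranspose_smul, Matrix.conjTranspose_sub, Matrix.conjTranspose_one,
      Matrix.conjTranspose_smul, hWherm]
    congr 2
    · simp [Complex.star_def, Complex.conj_ofReal]
    · rw [Complex.star_def, map_div₀, hconjV, map_ofNat]
  · rw [hmul x]
    have h1 : (2 / V) * (star v ⬝ᵥ x) = 1 := by
      field_simp
      linear_combination hkey
    rw [h1, one_smul, hvdef]
    simp only [sub_sub_cancel, smul_smul]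
    rw [mul_inv_cancel₀ hρC, one_smul]
  · refine specNorm_le _ ρ (le_of_lt hρpos) fun y => ?_
    rw [hmul y, vecNorm_smul]
    simp only [Complex.norm_real, Real.norm_eq_abs, abs_of_pos hρpos]
    have hnorm_eq : vecNorm (y - ((2 / V) * (star v ⬝ᵥ y)) • v) = vecNorm y := by
      set k : ℂ := (2 / V) * (star v ⬝ᵥ y) with hkdef
      set d : ℂ := star v ⬝ᵥ y with hddef
      set cd : ℂ := star y ⬝ᵥ v with hcddef
      have hconjk : (starRingEnd ℂ) k = (2 / V) * cd := by
        have h2 : (starRingEnd ℂ) 2 = 2 := map_ofNat _ 2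
        rw [hkdef, map_mul, map_div₀, hconjV, h2, hddef, conj_dot]
      have hdot : star (y - k • v) ⬝ᵥ (y - k • v) = star y ⬝ᵥ y := by
        rw [star_sub, star_smul, sub_dotProduct, dotProduct_sub,
          dotProduct_sub, smul_dotProduct, smul_dotProduct,
          dotProduct_smul, dotProduct_smul]
        simp only [smul_eq_mul, Complex.star_def, hconjk]
        simp only [← hddef, ← hcddef, ← hVdef, hkdef]
        field_simp
        ring
      have h2 : ((vecNorm (y - k • v) : ℝ) : ℂ)^2 = ((vecNorm y : ℝ) : ℂ)^2 := by
        rw [← dot_self_eq, ← dot_self_eq, hdot]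
      have h3 : (vecNorm (y - k • v))^2 = (vecNorm y)^2 := by exact_mod_cast h2
      have h4 := congrArg Real.sqrt h3
      rwa [Real.sqrt_sq (vecNorm_nonneg _), Real.sqrt_sq (vecNorm_nonneg _)] at h4
    rw [hnorm_eq]

end Aux

namespace Aux
variable {n : Type*} [Fintype n] [DecidableEq n]

lemma conj_dot_mulVec (M : Matrix n n ℂ) (hM : M.IsHermitian) (u w : n → ℂ) :
    (starRingEnd ℂ) (star u ⬝ᵥ M.mulVec w) = star w ⬝ᵥ M.mulVec u := by
  have h1 : star u ⬝ᵥ M.mulVec w = star (star (M.mulVec w) ⬝ᵥ u) := Matrix.star_dotProduct _ _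
  rw [Complex.star_def] at h1
  have h2 := congrArg (starRingEnd ℂ) h1
  rw [Complex.conj_conj] at h2
  rw [h2, Matrix.star_mulVec, Matrix.dotProduct_mulVec, hM]

lemma vecNorm_add_le (u w : n → ℂ) : vecNorm (u + w) ≤ vecNorm u + vecNorm w := by
  rw [vecNorm_def, vecNorm_def, vecNorm_def]
  rw [show (WithLp.equiv 2 (n → ℂ)).symm (u + w)
    = (WithLp.equiv 2 (n → ℂ)).symm u + (WithLp.equiv 2 (n → ℂ)).symm w from rfl]
  exact norm_add_le _ _

lemma vecNorm_sub_le (u w : n → ℂ) : vecNorm (u - w) ≤ vecNorm u + vecNorm w := by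
  rw [vecNorm_def, vecNorm_def, vecNorm_def]
  rw [show (WithLp.equiv 2 (n → ℂ)).symm (u - w)
    = (WithLp.equiv 2 (n → ℂ)).symm u - (WithLp.equiv 2 (n → ℂ)).symm w from rfl]
  exact norm_sub_le _ _

/-- quadratic form of a Hermitian, not indefinite matrix vanishing at `x` forces `M x = 0`. -/
lemma mulVec_eq_zero_of_not_indef (M : Matrix n n ℂ) (hM : M.IsHermitian)
    (hnind : ¬ IsIndefinite M) (x : n → ℂ) (hx0 : star x ⬝ᵥ M.mulVec x = 0) :
    M.mulVec x = 0 := by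
  -- helper for the PSD case
  have main : ∀ M' : Matrix n n ℂ, M'.IsHermitian → (∀ y, 0 ≤ (star y ⬝ᵥ M'.mulVec y).re) →
      ∀ x' : n → ℂ, star x' ⬝ᵥ M'.mulVec x' = 0 → M'.mulVec x' = 0 := by
    intro M' hM' hpos x' hx0'
    set z : n → ℂ := M'.mulVec x' with hz
    by_contra hz0
    have hN : (0:ℝ) < (vecNorm z)^2 := by
      have := vecNorm_nonneg z
      have hne : vecNorm z ≠ 0 := fun h => hz0 (vecNorm_eq_zero.mp h)
      positivity
    set N : ℝ := (vecNorm z)^2 with hNdef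
    have hzz : star z ⬝ᵥ z = ((N : ℝ) : ℂ) := by
      rw [dot_self_eq z, hNdef]; push_cast; ring
    have hxMz : star x' ⬝ᵥ M'.mulVec z = ((N : ℝ) : ℂ) := by
      rw [← conj_dot_mulVec M' hM' z x', ← hz, hzz]
      simp [Complex.conj_ofReal]
    have key : ∀ t : ℝ, 0 ≤ 2 * t * N + (star z ⬝ᵥ M'.mulVec z).re := by
      intro t
      have hy := hpos ((t : ℂ) • x' + z)
      have hexp : star ((t : ℂ) • x' + z) ⬝ᵥ M'.mulVec ((t : ℂ) • x' + z)
          = (2 * (t:ℂ)) * ((N : ℝ) : ℂ) + star z ⬝ᵥ M'.mulVec z := by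
        rw [Matrix.mulVec_add, Matrix.mulVec_smul]
        rw [star_add, star_smul]
        rw [add_dotProduct, smul_dotProduct, dotProduct_add,
          dotProduct_add, dotProduct_smul, dotProduct_smul]
        have hst : star (t : ℂ) = (t : ℂ) := by simp [Complex.star_def, Complex.conj_ofReal]
        rw [hst, ← hz, hx0', hxMz]
        have hzx : star z ⬝ᵥ z = ((N:ℝ):ℂ) := hzz
        rw [hzx]
        simp only [smul_eq_mul]
        ring
      rw [hexp] at hy
      simpa [Complex.add_re, Complex.mul_re, Complex.ofReal_re, Complex.ofReal_im] using hy
    -- choose t very negative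
    set q : ℝ := (star z ⬝ᵥ M'.mulVec z).re with hq
    have hN' : N ≠ 0 := ne_of_gt hN
    have hkt := key (-(q + 1) / (2 * N))
    have harr : 2 * (-(q + 1) / (2 * N)) * N = -(q + 1) := by
      field_simp
    rw [harr] at hkt
    linarith
  rw [IsIndefinite, not_and_or] at hnind
  rcases hnind with h | h
  · push_neg at h
    -- all nonpositive: apply to -M
    have hneg : ∀ y, 0 ≤ (star y ⬝ᵥ (-M).mulVec y).re := by
      intro y
      have := h y
      rw [Matrix.neg_mulVec, dotProduct_neg, Complex.neg_re]
      linarith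
    have hMherm : (-M).IsHermitian := hM.neg
    have hx0' : star x ⬝ᵥ (-M).mulVec x = 0 := by
      rw [Matrix.neg_mulVec, dotProduct_neg, hx0, neg_zero]
    have := main (-M) hMherm hneg x hx0'
    rw [Matrix.neg_mulVec] at this
    have := congrArg Neg.neg this
    simpa using this
  · push_neg at h
    exact main M hM h x hx0

end Aux

namespace Aux
variable {n : Type*} [Fintype n] [DecidableEq n]

lemma specNorm_smul (c : ℂ) (M : Matrix n n ℂ) :
    specNorm (c • M) = ‖c‖ * specNorm M := by
  rw [specNorm, specNorm, map_smul]
  exact norm_smul c (Matrix.toEuclideanCLM (𝕜 := ℂ) M)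

lemma specNorm_add_le (M N : Matrix n n ℂ) :
    specNorm (M + N) ≤ specNorm M + specNorm N := by
  rw [specNorm, specNorm, specNorm, map_add]
  exact norm_add_le _ _

lemma conj_mul_self (c : ℂ) : (starRingEnd ℂ) c * c = ((‖c‖ ^ 2 : ℝ) : ℂ) := by
  rw [mul_comm, Complex.mul_conj]
  norm_cast
  exact (Complex.sq_norm c).symm

lemma vecNorm_sq_decomp (x s : n → ℂ) (c : ℂ) (hx : star x ⬝ᵥ x = 1)
    (hperp : star x ⬝ᵥ s = 0) :
    (vecNorm (c • x + s))^2 = ‖c‖^2 + (vecNorm s)^2 := by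
  have hsx : star s ⬝ᵥ x = 0 := by rw [← conj_dot x s, hperp, map_zero]
  have hdot : star (c • x + s) ⬝ᵥ (c • x + s)
      = ((‖c‖^2 + (vecNorm s)^2 : ℝ) : ℂ) := by
    rw [star_add, star_smul, add_dotProduct, smul_dotProduct,
      dotProduct_add, dotProduct_add, dotProduct_smul,
      dotProduct_smul, hx, hperp, hsx, dot_self_eq s]
    simp only [smul_eq_mul, Complex.star_def, mul_zero, mul_one, add_zero, zero_add]
    rw [conj_mul_self]
    push_cast
    ring
  have h2 : ((vecNorm (c • x + s) : ℝ) : ℂ)^2 = ((‖c‖^2 + (vecNorm s)^2 : ℝ) : ℂ) := by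
    rw [← dot_self_eq, hdot]
  exact_mod_cast h2

lemma vecNorm_perp_le (x r : n → ℂ) (hx : star x ⬝ᵥ x = 1) :
    vecNorm (r - (star x ⬝ᵥ r) • x) ≤ vecNorm r := by
  set c : ℂ := star x ⬝ᵥ r with hc
  set s : n → ℂ := r - c • x with hs
  have hperp : star x ⬝ᵥ s = 0 := by
    rw [hs, dotProduct_sub, dotProduct_smul, hx, smul_eq_mul, mul_one, ← hc,
      sub_self]
  have hr : r = c • x + s := by rw [hs]; abel
  have hdec := vecNorm_sq_decomp x s c hx hperp
  rw [← hr] at hdec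
  have h1 : (vecNorm s)^2 ≤ (vecNorm r)^2 := by
    rw [hdec]
    have := sq_nonneg (‖c‖)
    linarith
  have h2 := Real.sqrt_le_sqrt h1
  rwa [Real.sqrt_sq (vecNorm_nonneg _), Real.sqrt_sq (vecNorm_nonneg _)] at h2

lemma exists_orthonormal (x : n → ℂ) (hx : star x ⬝ᵥ x = 1) (C : Matrix n n ℂ)
    (hCind : IsIndefinite C) :
    ∃ u : n → ℂ, star x ⬝ᵥ u = 0 ∧ star u ⬝ᵥ u = 1 := by
  set x' : EuclideanSpace ℂ n := (WithLp.equiv 2 (n → ℂ)).symm x with hx'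
  by_cases hK : (ℂ ∙ x')ᗮ = ⊥
  · exfalso
    have hspan : (ℂ ∙ x') = ⊤ := Submodule.orthogonal_eq_bot_iff.mp hK
    have hmul : ∀ y : n → ℂ, ∃ c : ℂ, y = c • x := by
      intro y
      have hmem : (WithLp.equiv 2 (n → ℂ)).symm y ∈ (ℂ ∙ x') := hspan ▸ Submodule.mem_top
      obtain ⟨c, hc⟩ := Submodule.mem_span_singleton.mp hmem
      refine ⟨c, ?_⟩
      have h3 := congrArg (WithLp.equiv 2 (n → ℂ)) hc
      simpa [hx'] using h3.symm
    have quad : ∀ y : n → ℂ, ∃ t : ℝ, 0 ≤ t ∧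
        (star y ⬝ᵥ C.mulVec y).re = t * (star x ⬝ᵥ C.mulVec x).re := by
      intro y
      obtain ⟨c, hc⟩ := hmul y
      refine ⟨‖c‖^2, sq_nonneg _, ?_⟩
      rw [hc, Matrix.mulVec_smul, star_smul, smul_dotProduct, dotProduct_smul]
      simp only [smul_eq_mul, Complex.star_def, ← mul_assoc]
      rw [conj_mul_self]
      exact Complex.re_ofReal_mul _ _
    obtain ⟨y, hy⟩ := hCind.1
    obtain ⟨z, hz⟩ := hCind.2
    obtain ⟨t, ht0, hteq⟩ := quad y
    obtain ⟨s, hs0, hseq⟩ := quad z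
    rw [hteq] at hy
    rw [hseq] at hz
    have hw : 0 < (star x ⬝ᵥ C.mulVec x).re := by
      rcases mul_pos_iff.mp hy with ⟨_, h⟩ | ⟨h1, _⟩
      · exact h
      · linarith
    nlinarith [mul_nonneg hs0 hw.le]
  · obtain ⟨u', hu'mem, hu'ne⟩ := Submodule.exists_mem_ne_zero_of_ne_bot hK
    have hnu : ‖u'‖ ≠ 0 := norm_ne_zero_iff.mpr hu'ne
    set u : n → ℂ := (WithLp.equiv 2 (n → ℂ)) (((‖u'‖ : ℂ))⁻¹ • u') with hu
    have hsymmu : (WithLp.equiv 2 (n → ℂ)).symm u = ((‖u'‖ : ℂ))⁻¹ • u' := by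
      rw [hu]; simp
    refine ⟨u, ?_, ?_⟩
    · have hinner : (inner ℂ x' ((WithLp.equiv 2 (n → ℂ)).symm u) : ℂ) = 0 := by
        rw [hsymmu, inner_smul_right]
        have h0 : (inner ℂ x' u' : ℂ) = 0 :=
          hu'mem x' (Submodule.mem_span_singleton_self x')
        rw [h0, mul_zero]
      rw [hx', inner_equiv_symm] at hinner
      exact hinner
    · rw [dot_self_eq u]
      have hnorm : vecNorm u = 1 := by
        rw [vecNorm_def, hsymmu, norm_smul]
        simp [hnu]
      rw [hnorm]
      norm_num
end Aux

namespace Aux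
variable {n : Type*} [Fintype n] [DecidableEq n]

lemma vecNorm_eq_one {x : n → ℂ} (hx : star x ⬝ᵥ x = 1) : vecNorm x = 1 := by
  have h : ((vecNorm x : ℝ) : ℂ)^2 = 1 := by rw [← dot_self_eq, hx]
  have h2 : (vecNorm x)^2 = 1 := by exact_mod_cast h
  have h3 := congrArg Real.sqrt h2
  rwa [Real.sqrt_sq (vecNorm_nonneg _), Real.sqrt_one] at h3

lemma vecNorm_neg (y : n → ℂ) : vecNorm (-y) = vecNorm y := by
  have h : -y = (-1 : ℂ) • y := by funext i; simp
  rw [h, vecNorm_smul]; simp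

lemma le_of_sq_le_sq {a b : ℝ} (ha : 0 ≤ a) (hb : 0 ≤ b) (h : a^2 ≤ b^2) : a ≤ b := by
  have h2 := Real.sqrt_le_sqrt h
  rwa [Real.sqrt_sq ha, Real.sqrt_sq hb] at h2

lemma lower_bound (A C : Matrix n n ℂ) (hA0 : A ≠ 0) (hC0 : C ≠ 0)
    (μ lam : ℝ) (x : n → ℂ) (hx : star x ⬝ᵥ x = 1)
    (ε : ℝ) (δA δC : Matrix n n ℂ)
    (hnA : specNorm δA ≤ ε * specNorm A) (hnC : specNorm δC ≤ ε * specNorm C)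
    (htrip : Is2DEigentriplet (A + δA) (C + δC) μ lam x) :
    max (max (‖star x ⬝ᵥ A.mulVec x - (lam : ℂ)‖ / specNorm A)
        (‖star x ⬝ᵥ C.mulVec x‖ / specNorm C))
      (vecNorm ((A - (μ : ℂ) • C - (lam : ℂ) • 1).mulVec x) /
        (specNorm A + |μ| * specNorm C)) ≤ ε := by
  obtain ⟨heq, hCx0, hx1⟩ := htrip
  have hNA := specNorm_pos A hA0
  have hNC := specNorm_pos C hC0
  have hD : 0 < specNorm A + |μ| * specNorm C := by positivity
  have hxn : vecNorm x = 1 := vecNorm_eq_one hx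
  have hquad : ∀ M : Matrix n n ℂ, ‖star x ⬝ᵥ M.mulVec x‖ ≤ specNorm M := by
    intro M
    calc ‖star x ⬝ᵥ M.mulVec x‖ ≤ vecNorm x * vecNorm (M.mulVec x) :=
          abs_dot_le _ _
      _ ≤ vecNorm x * (specNorm M * vecNorm x) := by
          have h1 := vecNorm_mulVec_le M x
          have h0 := vecNorm_nonneg x
          nlinarith [vecNorm_nonneg (M.mulVec x)]
      _ = specNorm M := by rw [hxn]; ring
  have hterm2 : ‖star x ⬝ᵥ C.mulVec x‖ / specNorm C ≤ ε := by
    rw [div_le_iff₀ hNC]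
    have h1 : star x ⬝ᵥ C.mulVec x = -(star x ⬝ᵥ δC.mulVec x) := by
      have h2 : star x ⬝ᵥ (C + δC).mulVec x
          = star x ⬝ᵥ C.mulVec x + star x ⬝ᵥ δC.mulVec x := by
        rw [Matrix.add_mulVec, dotProduct_add]
      rw [hCx0] at h2
      linear_combination -h2
    rw [h1, norm_neg]
    exact (hquad δC).trans hnC
  have hterm1 : ‖star x ⬝ᵥ A.mulVec x - (lam : ℂ)‖ / specNorm A ≤ ε := by
    rw [div_le_iff₀ hNA]
    have hdot1 : star x ⬝ᵥ ((A + δA) - (μ : ℂ) • (C + δC)).mulVec x = (lam : ℂ) := by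
      rw [heq, dotProduct_smul, hx1, smul_eq_mul, mul_one]
    have hdot2 : star x ⬝ᵥ ((A + δA) - (μ : ℂ) • (C + δC)).mulVec x
        = star x ⬝ᵥ A.mulVec x + star x ⬝ᵥ δA.mulVec x
          - (μ : ℂ) * (star x ⬝ᵥ (C + δC).mulVec x) := by
      rw [Matrix.sub_mulVec, Matrix.smul_mulVec, dotProduct_sub,
        dotProduct_smul, smul_eq_mul, Matrix.add_mulVec, dotProduct_add]
    have h3 := hdot2.symm.trans hdot1
    rw [hCx0] at h3
    have h1 : star x ⬝ᵥ A.mulVec x - (lam : ℂ) = -(star x ⬝ᵥ δA.mulVec x) := by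
      linear_combination h3
    rw [h1, norm_neg]
    exact (hquad δA).trans hnA
  have hterm3 : vecNorm ((A - (μ : ℂ) • C - (lam : ℂ) • 1).mulVec x) /
      (specNorm A + |μ| * specNorm C) ≤ ε := by
    rw [div_le_iff₀ hD]
    have hr : (A - (μ : ℂ) • C - (lam : ℂ) • 1).mulVec x
        = -(δA.mulVec x) + (μ : ℂ) • (δC.mulVec x) := by
      funext i
      have hi := congrFun heq i
      simp only [Matrix.sub_mulVec, Matrix.add_mulVec, Matrix.smul_mulVec,
        Matrix.one_mulVec, Matrix.mulVec_add, Pi.add_apply, Pi.sub_apply, Pi.smul_apply,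
        Pi.neg_apply, smul_eq_mul] at hi ⊢
      linear_combination hi
    rw [hr]
    have hb1 : vecNorm (δA.mulVec x) ≤ ε * specNorm A := by
      have := vecNorm_mulVec_le δA x
      rw [hxn, mul_one] at this
      exact this.trans hnA
    have hb2 : vecNorm (δC.mulVec x) ≤ ε * specNorm C := by
      have := vecNorm_mulVec_le δC x
      rw [hxn, mul_one] at this
      exact this.trans hnC
    calc vecNorm (-(δA.mulVec x) + (μ : ℂ) • (δC.mulVec x))
        ≤ vecNorm (-(δA.mulVec x)) + vecNorm ((μ : ℂ) • (δC.mulVec x)) := vecNorm_add_le _ _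
      _ = vecNorm (δA.mulVec x) + |μ| * vecNorm (δC.mulVec x) := by
          rw [vecNorm_neg, vecNorm_smul, Complex.norm_real, Real.norm_eq_abs]
      _ ≤ ε * specNorm A + |μ| * (ε * specNorm C) := by
          have := abs_nonneg μ
          nlinarith [vecNorm_nonneg (δC.mulVec x)]
      _ = ε * (specNorm A + |μ| * specNorm C) := by ring
  exact max_le (max_le hterm1 hterm2) hterm3

end Aux

namespace Aux
variable {n : Type*} [Fintype n] [DecidableEq n]

lemma herm_real_smul (t : ℝ) (M : Matrix n n ℂ) (hM : M.IsHermitian) :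
    ((t : ℂ) • M).IsHermitian := by
  unfold Matrix.IsHermitian
  rw [Matrix.conjTranspose_smul, hM]
  congr 1
  simp [Complex.star_def, Complex.conj_ofReal]

lemma member_construction (A C : Matrix n n ℂ) (hA : A.IsHermitian) (hC : C.IsHermitian)
    (hA0 : A ≠ 0) (hC0 : C ≠ 0) (hCind : IsIndefinite C) (μ lam : ℝ) (x : n → ℂ)
    (hx : star x ⬝ᵥ x = 1) (η₁ : ℝ)
    (hη₁ : η₁ = max (max
        (‖star x ⬝ᵥ A.mulVec x - (lam : ℂ)‖ / specNorm A)
        (‖star x ⬝ᵥ C.mulVec x‖ / specNorm C))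
      (vecNorm ((A - (μ : ℂ) • C - (lam : ℂ) • 1).mulVec x) /
        (specNorm A + |μ| * specNorm C)))
    (δ : ℝ) (hδ : 0 < δ) :
    ∃ δA δC : Matrix n n ℂ, δA.IsHermitian ∧ δC.IsHermitian ∧
      specNorm δA ≤ (Real.sqrt 2 * η₁ + δ) * specNorm A ∧
      specNorm δC ≤ (Real.sqrt 2 * η₁ + δ) * specNorm C ∧
      IsIndefinite (C + δC) ∧ Is2DEigentriplet (A + δA) (C + δC) μ lam x := by
  set NA : ℝ := specNorm A with hNAdef
  set NC : ℝ := specNorm C with hNCdef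
  have hNA : 0 < NA := specNorm_pos A hA0
  have hNC : 0 < NC := specNorm_pos C hC0
  set D : ℝ := NA + |μ| * NC with hDdef
  have hD : 0 < D := by positivity
  set γc : ℂ := star x ⬝ᵥ C.mulVec x with hγdef
  set βc : ℂ := star x ⬝ᵥ A.mulVec x - (lam : ℂ) with hβdef
  have hγreal : (starRingEnd ℂ) γc = γc := by
    rw [hγdef]; exact conj_dot_mulVec C hC x x
  have hβreal : (starRingEnd ℂ) βc = βc := by
    rw [hβdef, map_sub, conj_dot_mulVec A hA x x, Complex.conj_ofReal]
  set r : (n → ℂ) := (A - (μ : ℂ) • C - (lam : ℂ) • 1).mulVec x with hrdef0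
  have hrdef : r = A.mulVec x - (μ : ℂ) • C.mulVec x - (lam : ℂ) • x := by
    rw [hrdef0, Matrix.sub_mulVec, Matrix.sub_mulVec, Matrix.smul_mulVec,
      Matrix.smul_mulVec, Matrix.one_mulVec]
  have hxr : star x ⬝ᵥ r = βc - (μ : ℂ) * γc := by
    rw [hrdef, dotProduct_sub, dotProduct_sub, dotProduct_smul,
      dotProduct_smul, hx, smul_eq_mul, smul_eq_mul, mul_one, ← hγdef, hβdef]
    ring
  set rp : (n → ℂ) := r - (star x ⬝ᵥ r) • x with hrpdef
  have hperp : star x ⬝ᵥ rp = 0 := by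
    rw [hrpdef, dotProduct_sub, dotProduct_smul, hx, smul_eq_mul, mul_one,
      sub_self]
  have hrple : vecNorm rp ≤ vecNorm r := vecNorm_perp_le x r hx
  -- η₁ bounds
  have hb1 : ‖βc‖ ≤ η₁ * NA := by
    have h1 : ‖βc‖ / NA ≤ η₁ := by
      rw [hη₁]; exact le_max_of_le_left (le_max_left _ _)
    rw [div_le_iff₀ hNA] at h1
    linarith
  have hb2 : ‖γc‖ ≤ η₁ * NC := by
    have h1 : ‖γc‖ / NC ≤ η₁ := by
      rw [hη₁]; exact le_max_of_le_left (le_max_right _ _)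
    rw [div_le_iff₀ hNC] at h1
    linarith
  have hb3 : vecNorm r ≤ η₁ * D := by
    have h1 : vecNorm r / D ≤ η₁ := by rw [hη₁]; exact le_max_right _ _
    rw [div_le_iff₀ hD] at h1
    linarith
  have hη₁0 : 0 ≤ η₁ := by
    have h0 : 0 ≤ ‖βc‖ / NA := by positivity
    have h1 : ‖βc‖ / NA ≤ η₁ := by
      rw [hη₁]; exact le_max_of_le_left (le_max_left _ _)
    linarith
  set θ : ℝ := (NC / D) * Real.sign μ with hθdef
  have hμθ : μ * θ = |μ| * NC / D := by
    rcases lt_trichotomy μ 0 with h | h | h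
    · rw [hθdef, Real.sign_of_neg h, abs_of_neg h]; ring
    · rw [h, hθdef]; simp
    · rw [hθdef, Real.sign_of_pos h, abs_of_pos h]; ring
  have hθabs : |θ| ≤ NC / D := by
    rw [hθdef, abs_mul]
    have h1 : |Real.sign μ| ≤ 1 := by
      rcases lt_trichotomy μ 0 with h | h | h
      · rw [Real.sign_of_neg h]; norm_num
      · rw [h]; simp
      · rw [Real.sign_of_pos h]; norm_num
    have h2 : |NC / D| = NC / D := abs_of_pos (by positivity)
    rw [h2]
    nlinarith [div_pos hNC hD]
  set c : n → ℂ := (-γc) • x + ((θ : ℝ) : ℂ) • rp with hcdef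
  set a : n → ℂ := (-βc) • x + (((μ * θ - 1 : ℝ)) : ℂ) • rp with hadef
  have hxc : star x ⬝ᵥ c = -γc := by
    rw [hcdef, dotProduct_add, dotProduct_smul, dotProduct_smul, hx,
      hperp, smul_eq_mul, smul_eq_mul, mul_one, mul_zero, add_zero]
  have hxa : star x ⬝ᵥ a = -βc := by
    rw [hadef, dotProduct_add, dotProduct_smul, dotProduct_smul, hx,
      hperp, smul_eq_mul, smul_eq_mul, mul_one, mul_zero, add_zero]
  have hamc : a - (μ : ℂ) • c = -r := by
    funext i
    have hi : rp i = r i - (star x ⬝ᵥ r) * x i := by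
      rw [hrpdef]; simp [Pi.sub_apply, Pi.smul_apply, smul_eq_mul]
    have hxri := hxr
    rw [hadef, hcdef]
    simp only [Pi.sub_apply, Pi.add_apply, Pi.smul_apply, Pi.neg_apply, smul_eq_mul]
    push_cast
    rw [hi]
    linear_combination (x i) * hxri
  -- Householder matrices
  obtain ⟨HC, hHCh, hHCx, hHCn⟩ := exists_hermitian x c hx (by rw [hxc, map_neg, hγreal])
  obtain ⟨HA, hHAh, hHAx, hHAn⟩ := exists_hermitian x a hx (by rw [hxa, map_neg, hβreal])
  -- norm bounds for a and c
  have hrp2 : (vecNorm rp)^2 ≤ (η₁ * D)^2 := by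
    have h1 : vecNorm rp ≤ η₁ * D := hrple.trans hb3
    nlinarith [vecNorm_nonneg rp]
  have hca : vecNorm c ≤ Real.sqrt 2 * η₁ * NC := by
    have hdec := vecNorm_sq_decomp x (((θ : ℝ) : ℂ) • rp) (-γc) hx
      (by rw [dotProduct_smul, hperp, smul_eq_mul, mul_zero])
    rw [← hcdef] at hdec
    have hsm : vecNorm (((θ : ℝ) : ℂ) • rp) = |θ| * vecNorm rp := by
      rw [vecNorm_smul, Complex.norm_real, Real.norm_eq_abs]
    have habs : ‖-γc‖ = ‖γc‖ := norm_neg γc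
    have hθ2 : |θ|^2 ≤ (NC/D)^2 := pow_le_pow_left₀ (abs_nonneg θ) hθabs 2
    have h2 : (|θ| * vecNorm rp)^2 ≤ (NC/D)^2 * (η₁ * D)^2 := by
      rw [mul_pow]
      exact mul_le_mul hθ2 hrp2 (sq_nonneg _) (sq_nonneg _)
    have h3 : (NC/D)^2 * (η₁*D)^2 = (η₁ * NC)^2 := by
      have hD0 : D ≠ 0 := ne_of_gt hD
      field_simp
    rw [h3] at h2
    have h4 : ‖γc‖^2 ≤ (η₁ * NC)^2 := pow_le_pow_left₀ (norm_nonneg γc) hb2 2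
    have hsq : (vecNorm c)^2 ≤ 2 * (η₁ * NC)^2 := by
      rw [hdec, habs, hsm]
      linarith
    refine le_of_sq_le_sq (vecNorm_nonneg _) (by positivity) ?_
    have h5 : (Real.sqrt 2 * η₁ * NC)^2 = 2 * (η₁ * NC)^2 := by
      rw [mul_pow, mul_pow, Real.sq_sqrt (by norm_num : (0:ℝ) ≤ 2)]
      ring
    rw [h5]
    exact hsq
  have haa : vecNorm a ≤ Real.sqrt 2 * η₁ * NA := by
    have hdec := vecNorm_sq_decomp x ((((μ * θ - 1 : ℝ)) : ℂ) • rp) (-βc) hx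
      (by rw [dotProduct_smul, hperp, smul_eq_mul, mul_zero])
    rw [← hadef] at hdec
    have hsm : vecNorm ((((μ * θ - 1 : ℝ)) : ℂ) • rp) = |μ * θ - 1| * vecNorm rp := by
      rw [vecNorm_smul, Complex.norm_real, Real.norm_eq_abs]
    have habs : ‖-βc‖ = ‖βc‖ := norm_neg βc
    have hD0 : D ≠ 0 := ne_of_gt hD
    have hval : μ * θ - 1 = -(NA / D) := by
      rw [hμθ, hDdef]
      field_simp
      ring
    have h2 : (NA/D * vecNorm rp)^2 ≤ (NA/D)^2 * (η₁ * D)^2 := by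
      rw [mul_pow]
      exact mul_le_mul (le_refl _) hrp2 (sq_nonneg _) (sq_nonneg _)
    have h3 : (NA/D)^2 * (η₁*D)^2 = (η₁ * NA)^2 := by
      field_simp
    rw [h3] at h2
    have h4 : ‖βc‖^2 ≤ (η₁ * NA)^2 := pow_le_pow_left₀ (norm_nonneg βc) hb1 2
    have hsq : (vecNorm a)^2 ≤ 2 * (η₁ * NA)^2 := by
      rw [hdec, habs, hsm, hval, abs_neg, abs_of_pos (by positivity : (0:ℝ) < NA / D)]
      linarith
    refine le_of_sq_le_sq (vecNorm_nonneg _) (by positivity) ?_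
    have h5 : (Real.sqrt 2 * η₁ * NA)^2 = 2 * (η₁ * NA)^2 := by
      rw [mul_pow, mul_pow, Real.sq_sqrt (by norm_num : (0:ℝ) ≤ 2)]
      ring
    rw [h5]
    exact hsq
  -- key triplet equation helper
  have key : ∀ δA δC : Matrix n n ℂ, (δA.mulVec x - (μ : ℂ) • δC.mulVec x = -r) →
      ((A + δA) - (μ : ℂ) • (C + δC)).mulVec x = (lam : ℂ) • x := by
    intro δA δC hd
    funext i
    have h1 := congrFun hd i
    have h2 := congrFun hrdef i
    simp only [Matrix.sub_mulVec, Matrix.add_mulVec, Matrix.smul_mulVec,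
      Matrix.mulVec_add, Pi.add_apply, Pi.sub_apply, Pi.smul_apply, Pi.neg_apply,
      smul_eq_mul] at h1 h2 ⊢
    linear_combination h1 - h2
  set ε : ℝ := Real.sqrt 2 * η₁ + δ with hεdef
  set M' : Matrix n n ℂ := C + HC with hM'def
  have hM'h : M'.IsHermitian := Matrix.IsHermitian.add hC hHCh
  have hxM' : star x ⬝ᵥ M'.mulVec x = 0 := by
    rw [hM'def, Matrix.add_mulVec, dotProduct_add, hHCx, hxc, ← hγdef, add_neg_cancel]
  by_cases hindef : IsIndefinite M'
  · refine ⟨HA, HC, hHAh, hHCh, ?_, ?_, hindef, ?_, hxM', hx⟩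
    · refine hHAn.trans (haa.trans ?_)
      rw [hεdef]
      have h1 : (Real.sqrt 2 * η₁ + δ) * NA = Real.sqrt 2 * η₁ * NA + δ * NA := by ring
      rw [h1]
      have h2 := mul_pos hδ hNA
      linarith
    · refine hHCn.trans (hca.trans ?_)
      rw [hεdef]
      have h1 : (Real.sqrt 2 * η₁ + δ) * NC = Real.sqrt 2 * η₁ * NC + δ * NC := by ring
      rw [h1]
      have h2 := mul_pos hδ hNC
      linarith
    · refine key HA HC ?_
      rw [hHAx, hHCx, hamc]
  · -- fix indefiniteness with a small off-diagonal bump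
    have hM'x : M'.mulVec x = 0 := mulVec_eq_zero_of_not_indef M' hM'h hindef x hxM'
    obtain ⟨u, hxu, huu⟩ := exists_orthonormal x hx C hCind
    have hux : star u ⬝ᵥ x = 0 := by rw [← conj_dot x u, hxu, map_zero]
    have hun : vecNorm u = 1 := vecNorm_eq_one huu
    have hxn : vecNorm x = 1 := vecNorm_eq_one hx
    set τ : ℝ := δ * min NC (NA / (|μ| + 1)) / 2 with hτdef
    have hτ : 0 < τ := by
      have h1 : 0 < NA / (|μ| + 1) := by positivity
      have h2 : 0 < min NC (NA / (|μ| + 1)) := lt_min hNC h1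
      positivity
    set G : Matrix n n ℂ := Matrix.vecMulVec x (star u) + Matrix.vecMulVec u (star x)
      with hGdef
    have hGh : G.IsHermitian := by
      unfold Matrix.IsHermitian
      rw [hGdef, Matrix.conjTranspose_add, outer_conjTranspose, outer_conjTranspose, add_comm]
    have hGmul : ∀ y, G.mulVec y = (star u ⬝ᵥ y) • x + (star x ⬝ᵥ y) • u := by
      intro y
      rw [hGdef, Matrix.add_mulVec, outer_mulVec, outer_mulVec]
    have hGx : G.mulVec x = u := by
      rw [hGmul x, hux, hx, zero_smul, one_smul, zero_add]
    have hGu : G.mulVec u = x := by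
      rw [hGmul u, huu, hxu, one_smul, zero_smul, add_zero]
    have hGn : specNorm G ≤ 2 := by
      refine specNorm_le G 2 (by norm_num) fun y => ?_
      rw [hGmul y]
      calc vecNorm ((star u ⬝ᵥ y) • x + (star x ⬝ᵥ y) • u)
          ≤ vecNorm ((star u ⬝ᵥ y) • x) + vecNorm ((star x ⬝ᵥ y) • u) := vecNorm_add_le _ _
        _ = ‖star u ⬝ᵥ y‖ * vecNorm x + ‖star x ⬝ᵥ y‖ * vecNorm u := by
            rw [vecNorm_smul, vecNorm_smul]
        _ = ‖star u ⬝ᵥ y‖ + ‖star x ⬝ᵥ y‖ := by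
            rw [hxn, hun, mul_one, mul_one]
        _ ≤ vecNorm u * vecNorm y + vecNorm x * vecNorm y :=
            add_le_add (abs_dot_le u y) (abs_dot_le x y)
        _ = 2 * vecNorm y := by rw [hxn, hun]; ring
    set δC : Matrix n n ℂ := HC + ((τ : ℝ) : ℂ) • G with hδCdef
    set δA : Matrix n n ℂ := HA + (((μ * τ : ℝ)) : ℂ) • G with hδAdef
    have hδCh : δC.IsHermitian := Matrix.IsHermitian.add hHCh (herm_real_smul τ G hGh)
    have hδAh : δA.IsHermitian := Matrix.IsHermitian.add hHAh (herm_real_smul (μ * τ) G hGh)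
    have h2τC : 2 * τ ≤ δ * NC := by
      have h1 : min NC (NA / (|μ| + 1)) ≤ NC := min_le_left _ _
      have h4 : 2 * τ = δ * min NC (NA / (|μ| + 1)) := by rw [hτdef]; ring
      rw [h4]
      exact mul_le_mul_of_nonneg_left h1 hδ.le
    have h2τA : 2 * (|μ| * τ) ≤ δ * NA := by
      have h1 : min NC (NA / (|μ| + 1)) ≤ NA / (|μ| + 1) := min_le_right _ _
      have h3 : 0 ≤ |μ| := abs_nonneg μ
      have h4 : 2 * (|μ| * τ) = |μ| * (δ * min NC (NA / (|μ| + 1))) := by rw [hτdef]; ring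
      rw [h4]
      calc |μ| * (δ * min NC (NA / (|μ| + 1))) ≤ |μ| * (δ * (NA / (|μ| + 1))) :=
            mul_le_mul_of_nonneg_left (mul_le_mul_of_nonneg_left h1 hδ.le) h3
        _ ≤ δ * NA := by
            have h6 : 0 < |μ| + 1 := by positivity
            have h7 : |μ| * (δ * (NA / (|μ| + 1))) = δ * NA * (|μ| / (|μ| + 1)) := by
              field_simp
            rw [h7]
            have h8 : |μ| / (|μ| + 1) ≤ 1 := by rw [div_le_one h6]; linarith
            have h9 : 0 ≤ δ * NA := by positivity
            exact mul_le_of_le_one_right h9 h8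
    have hδCn : specNorm δC ≤ ε * NC := by
      refine (specNorm_add_le _ _).trans ?_
      rw [specNorm_smul, Complex.norm_real, Real.norm_eq_abs, abs_of_pos hτ]
      have h1 : τ * specNorm G ≤ τ * 2 := mul_le_mul_of_nonneg_left hGn hτ.le
      have h2 : specNorm HC ≤ Real.sqrt 2 * η₁ * NC := hHCn.trans hca
      rw [hεdef]
      have h3 : (Real.sqrt 2 * η₁ + δ) * NC = Real.sqrt 2 * η₁ * NC + δ * NC := by ring
      rw [h3]
      linarith
    have hδAn : specNorm δA ≤ ε * NA := by
      refine (specNorm_add_le _ _).trans ?_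
      rw [specNorm_smul, Complex.norm_real, Real.norm_eq_abs, abs_mul, abs_of_pos hτ]
      have h1 : |μ| * τ * specNorm G ≤ |μ| * τ * 2 :=
        mul_le_mul_of_nonneg_left hGn (by positivity)
      have h2 : specNorm HA ≤ Real.sqrt 2 * η₁ * NA := hHAn.trans haa
      rw [hεdef]
      have h3 : (Real.sqrt 2 * η₁ + δ) * NA = Real.sqrt 2 * η₁ * NA + δ * NA := by ring
      rw [h3]
      linarith
    refine ⟨δA, δC, hδAh, hδCh, hδAn, hδCn, ?_, ?_, ?_, hx⟩
    · -- indefiniteness of C + δC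
      have hCδC : C + δC = M' + ((τ : ℝ) : ℂ) • G := by
        rw [hδCdef, hM'def, add_assoc]
      set q : ℂ := star u ⬝ᵥ M'.mulVec u with hqdef
      have hxMu : star x ⬝ᵥ M'.mulVec u = 0 := by
        have h1 : star u ⬝ᵥ M'.mulVec x = 0 := by rw [hM'x, dotProduct_zero]
        rw [← conj_dot_mulVec M' hM'h u x, h1, map_zero]
      have hqval : ∀ s : ℝ, (star (x + (s : ℂ) • u) ⬝ᵥ
          (M' + ((τ : ℝ) : ℂ) • G).mulVec (x + (s : ℂ) • u)).re
          = s^2 * q.re + 2 * τ * s := by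
        intro s
        have hstars : star ((s : ℂ)) = (s : ℂ) := by
          simp [Complex.star_def, Complex.conj_ofReal]
        have hdot : star (x + (s : ℂ) • u) ⬝ᵥ
            (M' + ((τ : ℝ) : ℂ) • G).mulVec (x + (s : ℂ) • u)
            = ((s^2 : ℝ) : ℂ) * q + ((2 * τ * s : ℝ) : ℂ) := by
          simp only [Matrix.add_mulVec, Matrix.mulVec_add, Matrix.mulVec_smul,
            Matrix.smul_mulVec, hM'x, hGx, hGu, smul_zero, zero_add, add_zero]
          rw [star_add, star_smul, hstars]
          simp only [add_dotProduct, smul_dotProduct, dotProduct_add,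
            dotProduct_smul, smul_eq_mul]
          rw [hxMu, hxu, hux, hx, huu]
          push_cast
          ring
        rw [hdot]
        simp only [Complex.add_re, Complex.ofReal_re]
        rw [Complex.re_ofReal_mul]
      rw [hCδC]
      set qr : ℝ := q.re with hqrdef
      set s0 : ℝ := τ / (|qr| + 1) with hs0def
      have hs0 : 0 < s0 := by positivity
      have hsabs : s0 * |qr| < τ := by
        rw [hs0def, div_mul_eq_mul_div, div_lt_iff₀ (by positivity)]
        nlinarith [abs_nonneg qr, hτ]
      constructor
      · refine ⟨x + (s0 : ℂ) • u, ?_⟩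
        rw [hqval s0]
        nlinarith [mul_lt_mul_of_pos_left hsabs hs0,
          mul_le_mul_of_nonneg_left (neg_abs_le qr) (sq_nonneg s0), mul_pos hτ hs0]
      · refine ⟨x + ((-s0 : ℝ) : ℂ) • u, ?_⟩
        rw [hqval (-s0)]
        nlinarith [mul_lt_mul_of_pos_left hsabs hs0,
          mul_le_mul_of_nonneg_left (le_abs_self qr) (sq_nonneg s0), mul_pos hτ hs0]
    · -- triplet equation
      refine key δA δC ?_
      rw [hδAdef, hδCdef]
      funext i
      have h1 := congrFun hamc i
      simp only [Matrix.add_mulVec, Matrix.smul_mulVec, Pi.add_apply, Pi.sub_apply,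
        Pi.smul_apply, Pi.neg_apply, smul_eq_mul] at h1 ⊢
      rw [hHAx, hHCx] at *
      push_cast
      push_cast at h1
      linear_combination h1
    · -- xᴴ (C + δC) x = 0
      rw [hδCdef, ← add_assoc, ← hM'def, Matrix.add_mulVec, dotProduct_add, hxM',
        Matrix.smul_mulVec, hGx, dotProduct_smul, hxu, smul_eq_mul, mul_zero,
        add_zero]

end Aux


/-- the backward error `η` (infimum of admissible
perturbation levels) satisfies `η₁ ≤ η ≤ √2 η₁`. -/
theorem stmt3 {n : Type*} [Fintype n] [DecidableEq n]
    (A C : Matrix n n ℂ) (hA : A.IsHermitian) (hC : C.IsHermitian)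
    (hA0 : A ≠ 0) (hC0 : C ≠ 0) (hCind : IsIndefinite C)
    (μ lam : ℝ) (x : n → ℂ) (hx : star x ⬝ᵥ x = 1)
    (η η₁ : ℝ)
    (hη : η = sInf {ε : ℝ | ∃ δA δC : Matrix n n ℂ,
        δA.IsHermitian ∧ δC.IsHermitian ∧
        specNorm δA ≤ ε * specNorm A ∧ specNorm δC ≤ ε * specNorm C ∧
        IsIndefinite (C + δC) ∧
        Is2DEigentriplet (A + δA) (C + δC) μ lam x})
    (hη₁ : η₁ = max (max
        (‖star x ⬝ᵥ A.mulVec x - (lam : ℂ)‖ / specNorm A)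
        (‖star x ⬝ᵥ C.mulVec x‖ / specNorm C))
      (vecNorm ((A - (μ : ℂ) • C - (lam : ℂ) • 1).mulVec x) /
        (specNorm A + |μ| * specNorm C))) :
    η₁ ≤ η ∧ η ≤ Real.sqrt 2 * η₁ := by
  set S : Set ℝ := {ε : ℝ | ∃ δA δC : Matrix n n ℂ,
      δA.IsHermitian ∧ δC.IsHermitian ∧
      specNorm δA ≤ ε * specNorm A ∧ specNorm δC ≤ ε * specNorm C ∧
      IsIndefinite (C + δC) ∧
      Is2DEigentriplet (A + δA) (C + δC) μ lam x} with hS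
  have hNA := Aux.specNorm_pos A hA0
  have hmem : ∀ δ : ℝ, 0 < δ → (Real.sqrt 2 * η₁ + δ) ∈ S := by
    intro δ hδ
    obtain ⟨δA, δC, h1, h2, h3, h4, h5, h6⟩ :=
      Aux.member_construction A C hA hC hA0 hC0 hCind μ lam x hx η₁ hη₁ δ hδ
    exact ⟨δA, δC, h1, h2, h3, h4, h5, h6⟩
  have hne : S.Nonempty := ⟨_, hmem 1 one_pos⟩
  have hbdd : BddBelow S := by
    refine ⟨0, fun ε hε => ?_⟩
    obtain ⟨δA, δC, _, _, h3, _, _, _⟩ := hε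
    nlinarith [Aux.specNorm_nonneg δA]
  constructor
  · rw [hη, hη₁]
    refine le_csInf hne ?_
    rintro ε ⟨δA, δC, _, _, h3, h4, _, h6⟩
    exact Aux.lower_bound A C hA0 hC0 μ lam x hx ε δA δC h3 h4 h6
  · rw [hη]
    exact le_of_forall_pos_le_add fun δ hδ => csInf_le hbdd (hmem δ hδ)
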